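/- Let S and T be Lawvere theories with distinguished objects s and t respectively, and let Y_T : T^op ⥤ AlgT be the restricted coYoneda embedding. The assignment Φ ↦ Φ^op ⋙ Y_T defines an essentially bijective correspondence between finite-product-preserving functors Φ : S → T with Φ(s) ≅ t (taken up to natural isomorphism) and finite-coproduct-preserving functors A : S^op ⥤ AlgT with A(s) isomorphic to the corepresentable functor Hom_T(t, −), i.e. to the free T-algebra on one generator (taken up to natural isomorphism). In particular, every internal S-coalgebra structure on the free T-algebra on one generator arises from a unique-up-to-isomorphism theory morphism S → T. -/

import Mathlib

universe u

open CategoryTheory Limits Opposite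

/-- The category of `T`-algebras: the full subcategory of `T ⥤ Type u` consisting of the
finite-product-preserving functors. -/
abbrev LawvereAlgCat (T : Type u) [SmallCategory T] :=
  ObjectProperty.FullSubcategory (fun F : T ⥤ Type u => PreservesFiniteProducts F)

/-- The restricted coYoneda embedding `Tᵒᵖ ⥤ AlgCat T`, sending `t` to `Hom_T(t, -)`. -/
noncomputable def coYon (T : Type u) [SmallCategory T] : Tᵒᵖ ⥤ LawvereAlgCat T :=
  ObjectProperty.lift _ coyoneda (fun _ => inferInstance)

namespace Stmt11Aux

variable {T : Type u} [SmallCategory T]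

instance : (coYon T).Full :=
  inferInstanceAs (ObjectProperty.lift (fun F : T ⥤ Type u => PreservesFiniteProducts F) coyoneda (fun _ => inferInstance)).Full

instance : (coYon T).Faithful :=
  inferInstanceAs (ObjectProperty.lift (fun F : T ⥤ Type u => PreservesFiniteProducts F) coyoneda (fun _ => inferInstance)).Faithful

/-- Lift an element family to the product, for a product-preserving functor. -/
noncomputable def descB {J : Type} [Fintype J] {f : J → T} (c : Fan f) (hc : IsLimit c)
    (G : T ⥤ Type u) (hG : PreservesFiniteProducts G) (a : ∀ j, G.obj (f j)) : G.obj c.pt :=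
  letI := hG
  (isLimitOfPreserves G hc).lift
    ⟨PUnit, Discrete.natTrans (fun j => TypeCat.ofHom fun _ => a j.as)⟩ PUnit.unit

lemma descB_spec {J : Type} [Fintype J] {f : J → T} (c : Fan f) (hc : IsLimit c)
    (G : T ⥤ Type u) (hG : PreservesFiniteProducts G) (a : ∀ j, G.obj (f j)) (j : J) :
    G.map (c.proj j) (descB c hc G hG a) = a j := by
  letI := hG
  exact ConcreteCategory.congr_hom ((isLimitOfPreserves G hc).fac
    ⟨PUnit, Discrete.natTrans (fun j => TypeCat.ofHom fun _ => a j.as)⟩ ⟨j⟩) PUnit.unit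

lemma descB_uniq {J : Type} [Fintype J] {f : J → T} (c : Fan f) (hc : IsLimit c)
    (G : T ⥤ Type u) (hG : PreservesFiniteProducts G) (a : ∀ j, G.obj (f j))
    (b : G.obj c.pt) (hb : ∀ j, G.map (c.proj j) b = a j) : b = descB c hc G hG a := by
  letI := hG
  exact ConcreteCategory.congr_hom ((isLimitOfPreserves G hc).uniq
    ⟨PUnit, Discrete.natTrans (fun j => TypeCat.ofHom fun _ => a j.as)⟩ (TypeCat.ofHom fun _ => b)
    (by rintro ⟨j⟩; ext; exact hb j)) PUnit.unit

/-- The restricted coyoneda embedding sends (finite) products to coproducts. -/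
noncomputable def isColimitCoYonMap {J : Type} [Fintype J] {f : J → T}
    (c : Fan f) (hc : IsLimit c) : IsColimit ((coYon T).mapCocone c.op) where
  desc sc := ObjectProperty.homMk
    (coyonedaEquiv.symm (descB c hc sc.pt.obj sc.pt.property
      (fun j => coyonedaEquiv (sc.ι.app ⟨j⟩).hom)) :
        coyoneda.obj (op c.pt) ⟶ sc.pt.obj)
  fac sc := by
    rintro ⟨j⟩
    apply ObjectProperty.hom_ext
    show coyoneda.map (c.proj j).op ≫ coyonedaEquiv.symm _ = (sc.ι.app ⟨j⟩).hom
    apply coyonedaEquiv.injective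
    rw [← coyonedaEquiv_naturality, Equiv.apply_symm_apply]
    exact descB_spec c hc sc.pt.obj sc.pt.property _ j
  uniq sc m hm := by
    apply ObjectProperty.hom_ext
    show m.hom = coyonedaEquiv.symm _
    rw [← Equiv.symm_apply_apply coyonedaEquiv m.hom]
    congr 1
    apply descB_uniq
    intro j
    refine (coyonedaEquiv_naturality (X := c.pt) (F := sc.pt.obj) m.hom (c.proj j)).trans ?_
    exact congrArg coyonedaEquiv (congrArg InducedCategory.Hom.hom (hm ⟨j⟩))

lemma coYon_preservesFiniteCoproducts [HasFiniteProducts T] :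
    PreservesFiniteCoproducts (coYon T) where
  preserves J := by
    constructor
    intro K
    let f : Fin J → T := fun j => (K.obj ⟨j⟩).unop
    have e : Discrete.functor (fun j => op (f j)) ≅ K := Discrete.natIso fun j => Iso.refl _
    haveI : PreservesColimit (Discrete.functor (fun j => op (f j))) (coYon T) :=
      preservesColimit_of_preserves_colimit_cocone
        (Fan.IsLimit.op (productIsProduct f)) (isColimitCoYonMap _ (productIsProduct f))
    exact preservesColimit_of_iso_diagram _ e

variable {C : Type*} [Category C] {D : Type*} [Category D] {E : Type*} [Category E]

/-- Lift a functor through a fully faithful functor whose essential image contains the image. -/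
noncomputable def liftThrough (Y : C ⥤ D) [Y.Full] [Y.Faithful]
    (A : E ⥤ D) (h : ∀ x, Y.essImage (A.obj x)) : E ⥤ C where
  obj x := Functor.essImage.witness (h x)
  map f := Y.preimage ((Functor.essImage.getIso (h _)).hom ≫ A.map f ≫
    (Functor.essImage.getIso (h _)).inv)
  map_id x := Y.map_injective (by simp)
  map_comp f g := Y.map_injective (by simp)

/-- The lifted functor composed with `Y` is isomorphic to `A`. -/
noncomputable def liftThroughIso (Y : C ⥤ D) [Y.Full] [Y.Faithful]
    (A : E ⥤ D) (h : ∀ x, Y.essImage (A.obj x)) : liftThrough Y A h ⋙ Y ≅ A :=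
  NatIso.ofComponents (fun x => Functor.essImage.getIso (h x)) (by
    intro x y f
    simp [liftThrough])

end Stmt11Aux

open Stmt11Aux in
/-- Let `S` and `T` be Lawvere theories with distinguished objects `s` and
`t`, and let `Y_T : Tᵒᵖ ⥤ AlgCat T` be the restricted coYoneda embedding.  The assignment
`Φ ↦ Φ.op ⋙ Y_T` defines an essentially bijective correspondence between
finite-product-preserving functors `Φ : S ⥤ T` with `Φ s ≅ t` (up to natural isomorphism) and
finite-coproduct-preserving functors `A : Sᵒᵖ ⥤ AlgCat T` with `A s` isomorphic to the
corepresentable functor `Hom_T (t, -)`, i.e. the free `T`-algebra on one generator (up to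
natural isomorphism). -/
theorem stmt_11 {S T : Type u} [SmallCategory S] [SmallCategory T]
    [HasFiniteProducts S] [HasFiniteProducts T] (s : S) (t : T)
    (hs : ∀ x : S, ∃ n : ℕ, Nonempty (x ≅ piObj fun _ : Fin n => s))
    (ht : ∀ x : T, ∃ n : ℕ, Nonempty (x ≅ piObj fun _ : Fin n => t)) :
    -- the assignment is well defined
    (∀ Φ : S ⥤ T, PreservesFiniteProducts Φ → Nonempty (Φ.obj s ≅ t) →
      PreservesFiniteCoproducts (Φ.op ⋙ coYon T) ∧
        Nonempty ((Φ.op ⋙ coYon T).obj (op s) ≅ (coYon T).obj (op t))) ∧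
    -- essential surjectivity
    (∀ A : Sᵒᵖ ⥤ LawvereAlgCat T, PreservesFiniteCoproducts A →
      Nonempty (A.obj (op s) ≅ (coYon T).obj (op t)) →
      ∃ Φ : S ⥤ T, PreservesFiniteProducts Φ ∧ Nonempty (Φ.obj s ≅ t) ∧
        Nonempty (Φ.op ⋙ coYon T ≅ A)) ∧
    -- essential injectivity
    (∀ Φ₁ Φ₂ : S ⥤ T, PreservesFiniteProducts Φ₁ → PreservesFiniteProducts Φ₂ →
      Nonempty (Φ₁.obj s ≅ t) → Nonempty (Φ₂.obj s ≅ t) →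
      Nonempty (Φ₁.op ⋙ coYon T ≅ Φ₂.op ⋙ coYon T) → Nonempty (Φ₁ ≅ Φ₂)) := by
  haveI hY : PreservesFiniteCoproducts (coYon T) := coYon_preservesFiniteCoproducts
  refine ⟨?_, ?_, ?_⟩
  · -- well-definedness
    intro Φ hΦ ⟨e⟩
    haveI := hΦ
    haveI := preservesFiniteCoproducts_op Φ
    exact ⟨inferInstance, ⟨(coYon T).mapIso e.op.symm⟩⟩
  · -- essential surjectivity
    intro A hA ⟨es⟩
    haveI := hA
    -- the essential image of `coYon T` contains the image of `A`
    have himg : ∀ x : Sᵒᵖ, (coYon T).essImage (A.obj x) := by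
      intro x
      obtain ⟨n, ⟨e⟩⟩ := hs x.unop
      have h1 : IsColimit (A.mapCocone (Fan.mk (∏ᶜ fun _ : Fin n => s) (Pi.π _)).op) :=
        isColimitOfPreserves A (Fan.IsLimit.op (productIsProduct (fun _ : Fin n => s)))
      have h2 : IsColimit ((coYon T).mapCocone (Fan.mk (∏ᶜ fun _ : Fin n => t) (Pi.π _)).op) :=
        isColimitCoYonMap _ (productIsProduct (fun _ : Fin n => t))
      have eD : Discrete.functor (fun _ : Fin n => op s) ⋙ A ≅
          Discrete.functor (fun _ : Fin n => op t) ⋙ coYon T :=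
        Discrete.natIso fun _ => es
      have h3 : A.obj (op (∏ᶜ fun _ : Fin n => s)) ≅
          (coYon T).obj (op (∏ᶜ fun _ : Fin n => t)) :=
        h1.coconePointsIsoOfNatIso h2 eD
      exact ⟨op (∏ᶜ fun _ : Fin n => t), ⟨h3.symm ≪≫ A.mapIso e.op⟩⟩
    let Ψ : Sᵒᵖ ⥤ Tᵒᵖ := liftThrough (coYon T) A himg
    have isoΨ : Ψ ⋙ coYon T ≅ A := liftThroughIso (coYon T) A himg
    haveI : PreservesFiniteCoproducts Ψ := by
      constructor
      intro J
      haveI : PreservesColimitsOfShape (Discrete (Fin J)) (Ψ ⋙ coYon T) :=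
        preservesColimitsOfShape_of_natIso isoΨ.symm
      haveI : ReflectsColimitsOfSize.{0, 0} (coYon T) := fullyFaithful_reflectsColimits _
      exact preservesColimitsOfShape_of_reflects_of_preserves Ψ (coYon T)
    haveI := preservesFiniteProducts_unop Ψ
    refine ⟨Ψ.unop, inferInstance, ?_, ?_⟩
    · exact ⟨((coYon T).preimageIso (isoΨ.app (op s) ≪≫ es)).unop.symm⟩
    · exact ⟨Functor.isoWhiskerRight Ψ.unopOpIso (coYon T) ≪≫ isoΨ⟩
  · -- essential injectivity
    intro Φ₁ Φ₂ _ _ _ _ ⟨e⟩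
    exact ⟨(NatIso.removeOp (Functor.fullyFaithfulCancelRight (coYon T) e)).symm⟩
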